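/- Let r = a/b ∈ ℚ with a, b positive integers, a ≥ 2, gcd(a,b) = 1, and r < 1, and let H be the additive submonoid of ℚ generated by {rⁱ : i ∈ ℕ}. Then for every i ∈ ℕ, arⁱ = (b−a)r^{i+1} + ar^{i+1}, so ar^{i+1} divides arⁱ in H; consequently the sequence a, ar, ar², … is strictly decreasing with respect to the divisibility preorder of H, and hence the element a ∈ H does not satisfy the ACCP. -/

import Mathlib

theorem stmt17 (a b : ℕ) (ha : 2 ≤ a) (hb : 0 < b) (hab : Nat.gcd a b = 1)
    (hr : (a : ℚ) / b < 1) :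
    let r : ℚ := (a : ℚ) / b
    let H : AddSubmonoid ℚ := AddSubmonoid.closure {x : ℚ | ∃ i : ℕ, x = r ^ i}
    let dvdH : ℚ → ℚ → Prop := fun x y => ∃ h ∈ H, y = x + h
    (∀ i : ℕ, (a : ℚ) * r ^ i = ((b : ℚ) - a) * r ^ (i + 1) + a * r ^ (i + 1)) ∧
    (∀ i : ℕ, dvdH ((a : ℚ) * r ^ (i + 1)) ((a : ℚ) * r ^ i) ∧
      ¬ dvdH ((a : ℚ) * r ^ i) ((a : ℚ) * r ^ (i + 1))) ∧
    ¬ ¬ ∃ f : ℕ → ℚ, (∀ i, f i ∈ H) ∧ f 0 = (a : ℚ) ∧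
      ∀ i, dvdH (f (i + 1)) (f i) ∧ ¬ dvdH (f i) (f (i + 1)) := by
  intro r H dvdH
  have ha0 : (0:ℚ) < a := by exact_mod_cast lt_of_lt_of_le (by norm_num) ha
  have hb0 : (0:ℚ) < b := by exact_mod_cast hb
  have hr0 : 0 < r := div_pos ha0 hb0
  have hr1 : r < 1 := hr
  have hablt : a < b := by
    have : (a:ℚ) < b := by
      have := (div_lt_one hb0).mp hr
      exact this
    exact_mod_cast this
  have key : ∀ i : ℕ, (a : ℚ) * r ^ i = ((b : ℚ) - a) * r ^ (i + 1) + a * r ^ (i + 1) := by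
    intro i
    have h1 : ((b : ℚ) - a) * r ^ (i + 1) + a * r ^ (i + 1) = b * (r ^ i * r) := by
      rw [pow_succ]; ring
    rw [h1]
    show (a:ℚ) * r ^ i = b * (r ^ i * ((a:ℚ)/b))
    field_simp
  have hnonneg : ∀ x ∈ H, 0 ≤ x := by
    intro x hx
    induction hx using AddSubmonoid.closure_induction with
    | mem y hy => obtain ⟨i, rfl⟩ := hy; positivity
    | zero => exact le_refl 0
    | add x y _ _ hx hy => exact add_nonneg hx hy
  have hmem : ∀ (n : ℕ) (i : ℕ), (n:ℚ) * r ^ i ∈ H := by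
    intro n i
    have h1 : r ^ i ∈ H := AddSubmonoid.subset_closure ⟨i, rfl⟩
    have := AddSubmonoid.nsmul_mem H h1 n
    rwa [nsmul_eq_mul] at this
  have part2 : ∀ i : ℕ, dvdH ((a : ℚ) * r ^ (i + 1)) ((a : ℚ) * r ^ i) ∧
      ¬ dvdH ((a : ℚ) * r ^ i) ((a : ℚ) * r ^ (i + 1)) := by
    intro i
    constructor
    · refine ⟨((b - a : ℕ) : ℚ) * r ^ (i + 1), hmem _ _, ?_⟩
      rw [Nat.cast_sub hablt.le]
      rw [key i]; ring
    · rintro ⟨h, hh, heq⟩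
      have h0 := hnonneg h hh
      have hlt : (a:ℚ) * r ^ (i + 1) < (a:ℚ) * r ^ i := by
        have := pow_lt_pow_right_of_lt_one₀ hr0 hr1 (Nat.lt_succ_self i)
        exact mul_lt_mul_of_pos_left this ha0
      linarith [heq ▸ hlt]
  refine ⟨key, part2, ?_⟩
  intro hcon
  apply hcon
  refine ⟨fun i => (a:ℚ) * r ^ i, fun i => hmem a i, by simp, part2⟩
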